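/- In the symmetric group S_n with Coxeter element c = (1 2 ... n), a permutation σ satisfies ℓ(σ) + ℓ(σ⁻¹c) = ℓ(c) = n - 1 (where ℓ is reflection length) if and only if the cycle structure of σ corresponds to a non-crossing partition of {1,...,n}. -/

import Mathlib

/-- Reflection length in the symmetric group: minimal number of transpositions. -/
noncomputable def reflectionLength {n : ℕ} (σ : Equiv.Perm (Fin n)) : ℕ :=
  sInf {k | ∃ l : List (Equiv.Perm (Fin n)),
    (∀ τ ∈ l, τ.IsSwap) ∧ l.length = k ∧ l.prod = σ}

/-- The partition of `{1,…,n}` into the orbits (cycle supports) of `σ` is non-crossing. -/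
def OrbitsNonCrossing {n : ℕ} (σ : Equiv.Perm (Fin n)) : Prop :=
  ∀ a b c d : Fin n, a < b → b < c → c < d →
    σ.SameCycle a c → σ.SameCycle b d → σ.SameCycle a b

/-- Every cycle of `σ` is increasing in the cyclic order of `{1,…,n}`: each non-fixed point
`a` is sent to the least element of its orbit larger than `a`, or, when `a` is the largest
element of its orbit, to the least element of its orbit. -/
def CyclesIncreasing {n : ℕ} (σ : Equiv.Perm (Fin n)) : Prop :=
  ∀ a : Fin n, σ a ≠ a →
    ((a < σ a ∧ ∀ b, σ.SameCycle a b → a < b → σ a ≤ b) ∨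
     (σ a < a ∧ ∀ b, σ.SameCycle a b → σ a ≤ b ∧ b ≤ a))


/- ======================= auxiliary development ======================= -/

open Equiv Equiv.Perm Finset

namespace NCW
variable {n : ℕ}

def minreps (σ : Perm (Fin n)) : Finset (Fin n) :=
  univ.filter (fun a => ∀ b, σ.SameCycle a b → a ≤ b)
def cN (σ : Perm (Fin n)) : ℕ := (minreps σ).card

lemma sameCycle_sub {σ : Perm (Fin n)} {R : Fin n → Fin n → Prop} (hR : Equivalence R)
    (hstep : ∀ z, R z (σ z)) {a b : Fin n} (h : σ.SameCycle a b) : R a b := by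
  have hpow : ∀ (m : ℕ) (z : Fin n), R z ((σ ^ m) z) := by
    intro m
    induction m with
    | zero => intro z; simpa using hR.refl z
    | succ k ih =>
      intro z
      have h2 : R ((σ ^ k) z) (σ ((σ ^ k) z)) := hstep _
      have heq : (σ ^ (k+1)) z = σ ((σ ^ k) z) := by
        rw [pow_succ', Perm.mul_apply]
      rw [heq]
      exact hR.trans (ih z) h2
  obtain ⟨i, hi⟩ := h
  rcases i with m | m
  · have := hpow m a
    rw [show ((σ : Perm (Fin n)) ^ (Int.ofNat m)) = σ ^ m by exact_mod_cast zpow_natCast σ m] at hi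
    rw [hi] at this; exact this
  · -- i = -(m+1)
    have hz : (σ ^ (Int.negSucc m)) a = b := hi
    have key : (σ ^ (m+1)) b = a := by
      have := hz ▸ (rfl : (σ ^ (Int.negSucc m)) a = (σ ^ (Int.negSucc m)) a)
      rw [zpow_negSucc] at hz
      have := congrArg (fun w => (σ ^ (m+1)) w) hz
      simpa using this.symm
    have h' := hpow (m+1) b
    rw [key] at h'
    exact hR.symm h'


lemma mem_minreps {σ : Perm (Fin n)} {a : Fin n} :
    a ∈ minreps σ ↔ ∀ b, σ.SameCycle a b → a ≤ b := by simp [minreps]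

-- cls / μ
def cls (σ : Perm (Fin n)) (a : Fin n) : Finset (Fin n) := univ.filter (σ.SameCycle a ·)
lemma cls_nonempty (σ : Perm (Fin n)) (a : Fin n) : (cls σ a).Nonempty :=
  ⟨a, by simp only [cls, mem_filter, mem_univ, true_and]; exact SameCycle.refl σ a⟩
noncomputable def mu (σ : Perm (Fin n)) (a : Fin n) : Fin n := (cls σ a).min' (cls_nonempty σ a)
lemma sc_mu (σ : Perm (Fin n)) (a : Fin n) : σ.SameCycle a (mu σ a) := by
  have := (cls σ a).min'_mem (cls_nonempty σ a)
  exact (mem_filter.1 this).2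
lemma mu_le {σ : Perm (Fin n)} {a b : Fin n} (h : σ.SameCycle a b) : mu σ a ≤ b :=
  (cls σ a).min'_le b (by simp [cls, h])
lemma mu_mem_minreps (σ : Perm (Fin n)) (a : Fin n) : mu σ a ∈ minreps σ := by
  rw [mem_minreps]
  intro b hb
  exact mu_le ((sc_mu σ a).trans hb)
lemma mu_eq_of_sc {σ : Perm (Fin n)} {a b : Fin n} (h : σ.SameCycle a b) : mu σ a = mu σ b := by
  unfold mu; congr 1; unfold cls; apply filter_congr; intro c _
  exact ⟨fun hc => h.symm.trans hc, fun hc => h.trans hc⟩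
lemma minreps_eq_mu {σ : Perm (Fin n)} {a : Fin n} (ha : a ∈ minreps σ) : mu σ a = a :=
  le_antisymm (mu_le (SameCycle.refl _ _)) ((mem_minreps.1 ha) _ (sc_mu σ a))
lemma minreps_unique {σ : Perm (Fin n)} {a b : Fin n} (ha : a ∈ minreps σ) (hb : b ∈ minreps σ)
    (h : σ.SameCycle a b) : a = b :=
  le_antisymm (mem_minreps.1 ha _ h) (mem_minreps.1 hb _ h.symm)

lemma sc_fixed {σ : Perm (Fin n)} {a b : Fin n} (hfix : σ a = a) (h : σ.SameCycle a b) : a = b :=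
  h.eq_of_left hfix

lemma minreps_subset {σ σ' : Perm (Fin n)}
    (h : ∀ a b, σ'.SameCycle a b → σ.SameCycle a b) : minreps σ ⊆ minreps σ' := by
  intro a ha
  rw [mem_minreps] at *
  exact fun b hb => ha b (h a b hb)

lemma minreps_one : minreps (1 : Perm (Fin n)) = univ := by
  ext a; simp only [mem_minreps, mem_univ, iff_true]
  intro b hb
  exact le_of_eq (sc_fixed rfl hb)
lemma cN_one : cN (1 : Perm (Fin n)) = n := by simp [cN, minreps_one]
lemma cN_le (σ : Perm (Fin n)) : cN σ ≤ n := by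
  simpa [cN] using card_le_card (subset_univ (minreps σ))
lemma cN_pos (σ : Perm (Fin n)) (hn : 0 < n) : 0 < cN σ := by
  have : mu σ ⟨0, hn⟩ ∈ minreps σ := mu_mem_minreps _ _
  exact card_pos.2 ⟨_, this⟩
lemma cN_inv (σ : Perm (Fin n)) : cN σ⁻¹ = cN σ := by
  unfold cN; congr 1; ext a
  simp only [mem_minreps]
  constructor <;> intro h b hb
  · exact h b (sameCycle_inv.2 hb)
  · exact h b (sameCycle_inv.1 hb)

lemma sc_nat_pow {σ : Perm (Fin n)} {a b : Fin n} {m : ℕ} (h : (σ ^ m) a = b) :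
    σ.SameCycle a b := ⟨m, by simpa [zpow_natCast] using h⟩

-- if every a ≤ σ a then σ = 1
lemma eq_one_of_le {σ : Perm (Fin n)} (h : ∀ a, a ≤ σ a) : σ = 1 := by
  have hsum : ∑ a : Fin n, (a : ℕ) = ∑ a : Fin n, ((σ a : ℕ)) := (Equiv.sum_comp σ (fun a => (a:ℕ))).symm
  have : ∀ a : Fin n, ((a:ℕ)) = ((σ a : ℕ)) := by
    intro a
    have hle : ∀ a : Fin n, (a:ℕ) ≤ ((σ a : ℕ)) := fun a => h a
    exact le_antisymm (hle a) (by
      by_contra hlt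
      push_neg at hlt
      have hstrict : (∑ i : Fin n, (i:ℕ)) < ∑ i : Fin n, ((σ i : ℕ)) :=
        Finset.sum_lt_sum (fun i _ => hle i) ⟨a, mem_univ a, by omega⟩
      omega)
  ext a
  exact ((this a).symm : ((σ a : ℕ)) = a)

lemma cN_eq_n_iff {σ : Perm (Fin n)} : cN σ = n ↔ σ = 1 := by
  constructor
  · intro h
    have huniv : minreps σ = univ := eq_univ_of_card _ (by simpa [cN] using h)
    apply eq_one_of_le
    intro a
    have : a ∈ minreps σ := huniv ▸ mem_univ a
    exact mem_minreps.1 this _ ⟨1, by simp⟩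
  · rintro rfl; exact cN_one

end NCW

namespace NCW
variable {n : ℕ}

lemma mul_swap_apply (σ : Perm (Fin n)) (x y z : Fin n) :
    (σ * Equiv.swap x y) z = σ (Equiv.swap x y z) := rfl

lemma sc_step (σ : Perm (Fin n)) (z : Fin n) : σ.SameCycle z (σ z) := ⟨1, by simp⟩

/-- merging: if x,y in different cycles, then they are in the same cycle of σ * swap x y -/
lemma sc_merge {σ : Perm (Fin n)} {x y : Fin n} (hxy : x ≠ y) (h : ¬ σ.SameCycle x y) :
    (σ * Equiv.swap x y).SameCycle x y := by
  set τ := σ * Equiv.swap x y with hτ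
  have hex : ∃ k, 0 < k ∧ (σ ^ k) x = x :=
    ⟨orderOf σ, orderOf_pos σ, by rw [pow_orderOf_eq_one]; rfl⟩
  classical
  set p := Nat.find hex with hp
  obtain ⟨hppos, hpfix⟩ := Nat.find_spec hex
  have hmin : ∀ m, 0 < m → m < p → (σ ^ m) x ≠ x := by
    intro m hm hmp hfix
    exact absurd ⟨hm, hfix⟩ (Nat.find_min hex hmp)
  have hnoty : ∀ m : ℕ, (σ ^ m) x ≠ y := by
    intro m hm
    exact h (sc_nat_pow hm)
  have key : ∀ m, 1 ≤ m → m ≤ p → (τ ^ m) y = (σ ^ m) x := by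
    intro m
    induction m with
    | zero => omega
    | succ k ih =>
      intro _ hkp
      rcases Nat.eq_or_lt_of_le (show 1 ≤ k + 1 from by omega) with h1 | h1
      · -- k = 0
        have hk0 : k = 0 := by omega
        subst hk0
        simp only [zero_add, pow_one, hτ, mul_swap_apply, Equiv.swap_apply_right]
      · have hk1 : 1 ≤ k := by omega
        have hkl : k < p := by omega
        have ihk := ih hk1 (le_of_lt hkl)
        have : (τ ^ (k+1)) y = τ ((τ ^ k) y) := by rw [pow_succ', Perm.mul_apply]
        rw [this, ihk, hτ, mul_swap_apply,
          Equiv.swap_apply_of_ne_of_ne (hmin k hk1 hkl) (hnoty k)]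
        rw [← Perm.mul_apply, ← pow_succ']
  have : (τ ^ p) y = x := by rw [key p hppos le_rfl, hpfix]
  exact (sc_nat_pow this).symm

/-- if x,y are in the same cycle of σ*swap x y, σ-cycles are included in σ*swap x y cycles -/
lemma sc_incl {σ : Perm (Fin n)} {x y : Fin n}
    (h : (σ * Equiv.swap x y).SameCycle x y) {a b : Fin n} (hab : σ.SameCycle a b) :
    (σ * Equiv.swap x y).SameCycle a b := by
  set τ := σ * Equiv.swap x y with hτ
  refine sameCycle_sub (SameCycle.equivalence τ) ?_ hab
  intro z
  rcases eq_or_ne z x with rfl | hzx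
  · have : σ z = τ y := by rw [hτ, mul_swap_apply, Equiv.swap_apply_right]
    rw [this]
    exact h.trans (sc_step τ y)
  rcases eq_or_ne z y with rfl | hzy
  · have : σ z = τ x := by rw [hτ, mul_swap_apply, Equiv.swap_apply_left]
    rw [this]
    exact h.symm.trans (sc_step τ x)
  · have : σ z = τ z := by rw [hτ, mul_swap_apply, Equiv.swap_apply_of_ne_of_ne hzx hzy]
    rw [this]
    exact sc_step τ z

/-- cycles of σ*swap x y are within σ-cycles joined along {x,y} -/
lemma sc_decomp {σ : Perm (Fin n)} (x y : Fin n) {a b : Fin n}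
    (h : (σ * Equiv.swap x y).SameCycle a b) :
    σ.SameCycle a b ∨ ((σ.SameCycle a x ∨ σ.SameCycle a y) ∧ (σ.SameCycle b x ∨ σ.SameCycle b y)) := by
  set D : Fin n → Prop := fun z => σ.SameCycle z x ∨ σ.SameCycle z y with hD
  set R : Fin n → Fin n → Prop := fun u v => σ.SameCycle u v ∨ (D u ∧ D v) with hR
  have hequiv : Equivalence R := by
    constructor
    · intro u; exact Or.inl (SameCycle.refl _ _)
    · intro u v huv
      rcases huv with h1 | ⟨h1, h2⟩
      · exact Or.inl h1.symm
      · exact Or.inr ⟨h2, h1⟩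
    · intro u v w huv hvw
      rcases huv with h1 | ⟨h1, h2⟩ <;> rcases hvw with h3 | ⟨h3, h4⟩
      · exact Or.inl (h1.trans h3)
      · refine Or.inr ⟨?_, h4⟩
        rcases h3 with h3 | h3
        · exact Or.inl (h1.trans h3)
        · exact Or.inr (h1.trans h3)
      · refine Or.inr ⟨h1, ?_⟩
        rcases h2 with h2 | h2
        · exact Or.inl (h3.symm.trans h2)
        · exact Or.inr (h3.symm.trans h2)
      · exact Or.inr ⟨h1, h4⟩
  refine sameCycle_sub hequiv ?_ h
  intro z
  rcases eq_or_ne z x with rfl | hzx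
  · refine Or.inr ⟨Or.inl (SameCycle.refl _ _), ?_⟩
    have : (σ * Equiv.swap z y) z = σ y := by rw [mul_swap_apply, Equiv.swap_apply_left]
    rw [this]
    exact Or.inr (sc_step σ y).symm
  rcases eq_or_ne z y with rfl | hzy
  · refine Or.inr ⟨Or.inr (SameCycle.refl _ _), ?_⟩
    have : (σ * Equiv.swap x z) z = σ x := by rw [mul_swap_apply, Equiv.swap_apply_right]
    rw [this]
    exact Or.inl (sc_step σ x).symm
  · have : (σ * Equiv.swap x y) z = σ z := by rw [mul_swap_apply, Equiv.swap_apply_of_ne_of_ne hzx hzy]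
    rw [this]
    exact Or.inl (sc_step σ z)

/-- join inequality: multiplying by a swap loses at most one cycle-class -/
lemma join_ineq (σ : Perm (Fin n)) (x y : Fin n) :
    cN σ ≤ cN (σ * Equiv.swap x y) + 1 := by
  classical
  set τ := σ * Equiv.swap x y with hτ
  set S := minreps σ with hS
  set T := minreps τ with hT
  have hfail : ∀ u ∈ S \ T, (u = mu σ x ∨ u = mu σ y) ∧
      ∃ w, w < u ∧ (mu σ w = mu σ x ∨ mu σ w = mu σ y) := by
    intro u hu
    obtain ⟨huS, huT⟩ := mem_sdiff.1 hu
    rw [hT, mem_minreps] at huT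
    push_neg at huT
    obtain ⟨w, hw, hwlt⟩ := huT
    rcases sc_decomp x y hw with hcase | ⟨hu', hw'⟩
    · exact absurd (mem_minreps.1 huS w hcase) (not_le.2 hwlt)
    constructor
    · rcases hu' with h1 | h1
      · left; rw [← minreps_eq_mu huS]; exact mu_eq_of_sc h1
      · right; rw [← minreps_eq_mu huS]; exact mu_eq_of_sc h1
    · refine ⟨w, hwlt, ?_⟩
      rcases hw' with h1 | h1
      · exact Or.inl (mu_eq_of_sc h1)
      · exact Or.inr (mu_eq_of_sc h1)
  have hcard : (S \ T).card ≤ 1 := by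
    rw [card_le_one]
    intro u hu v hv
    by_contra hne
    obtain ⟨hu1, _⟩ := hfail u hu
    obtain ⟨hv1, _⟩ := hfail v hv
    have hmem : ∀ w : Fin n, (mu σ w = mu σ x ∨ mu σ w = mu σ y) → mu σ w = u ∨ mu σ w = v := by
      intro w hw
      rcases hu1 with h1 | h1 <;> rcases hv1 with h2 | h2
      · exact absurd (h1.trans h2.symm) hne
      · rcases hw with h3 | h3
        · exact Or.inl (h3.trans h1.symm)
        · exact Or.inr (h3.trans h2.symm)
      · rcases hw with h3 | h3
        · exact Or.inr (h3.trans h2.symm)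
        · exact Or.inl (h3.trans h1.symm)
      · exact absurd (h1.trans h2.symm) hne
    rcases lt_or_gt_of_ne hne with hlt | hlt
    · obtain ⟨_, w, hwu, hwmu⟩ := hfail u hu
      have hle : mu σ w ≤ w := mu_le (SameCycle.refl _ _)
      rcases hmem w hwmu with h3 | h3
      · rw [h3] at hle; exact absurd (lt_of_le_of_lt hle hwu) (lt_irrefl u)
      · rw [h3] at hle; exact absurd (lt_of_le_of_lt hle (hwu.trans hlt)) (lt_irrefl v)
    · obtain ⟨_, w, hwv, hwmu⟩ := hfail v hv
      have hle : mu σ w ≤ w := mu_le (SameCycle.refl _ _)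
      rcases hmem w hwmu with h3 | h3
      · rw [h3] at hle; exact absurd (lt_of_le_of_lt hle (hwv.trans hlt)) (lt_irrefl u)
      · rw [h3] at hle; exact absurd (lt_of_le_of_lt hle hwv) (lt_irrefl v)
  have h1 : S.card = (S \ T).card + (S ∩ T).card := (card_sdiff_add_card_inter S T).symm
  have h2 : (S ∩ T).card ≤ T.card := card_le_card inter_subset_right
  have : cN σ = S.card := rfl
  have hTN : cN τ = T.card := rfl
  omega

end NCW

namespace NCW
variable {n : ℕ}

noncomputable def rl (σ : Perm (Fin n)) : ℕ :=
  sInf {k | ∃ l : List (Perm (Fin n)),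
    (∀ τ ∈ l, τ.IsSwap) ∧ l.length = k ∧ l.prod = σ}

lemma sc_subset_of_split {σ : Perm (Fin n)} {x y : Fin n} (h : σ.SameCycle x y)
    {a b : Fin n} (hab : (σ * Equiv.swap x y).SameCycle a b) : σ.SameCycle a b := by
  have key : ((σ * Equiv.swap x y) * Equiv.swap x y) = σ := by
    rw [mul_assoc, Equiv.swap_mul_self, mul_one]
  have := sc_incl (σ := σ * Equiv.swap x y) (x := x) (y := y) (by rw [key]; exact h) hab
  rwa [key] at this

lemma inv_swap_mul (σ : Perm (Fin n)) (x y : Fin n) :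
    (Equiv.swap x y * σ)⁻¹ = σ⁻¹ * Equiv.swap x y := by
  rw [mul_inv_rev, Equiv.swap_inv]

lemma join_ineq_left (σ : Perm (Fin n)) (x y : Fin n) :
    cN σ ≤ cN (Equiv.swap x y * σ) + 1 := by
  have h := join_ineq σ⁻¹ x y
  rwa [← inv_swap_mul, cN_inv, cN_inv] at h

lemma exists_swaps_aux : ∀ (k : ℕ) (σ : Perm (Fin n)), σ.support.card ≤ k →
    ∃ l : List (Perm (Fin n)), (∀ τ ∈ l, τ.IsSwap) ∧ l.length = n - cN σ ∧ l.prod = σ := by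
  intro k
  induction k with
  | zero =>
    intro σ hk
    have : σ = 1 := by
      rw [← Equiv.Perm.support_eq_empty_iff]
      exact card_eq_zero.1 (Nat.le_zero.1 hk)
    subst this
    exact ⟨[], by simp, by simp [cN_one], by simp⟩
  | succ k ih =>
    intro σ hk
    by_cases h1 : σ = 1
    · subst h1; exact ⟨[], by simp, by simp [cN_one], by simp⟩
    · have hns : σ.support.Nonempty := by
        rw [Finset.nonempty_iff_ne_empty, Ne, Equiv.Perm.support_eq_empty_iff]
        exact h1
      obtain ⟨b, hb⟩ := hns
      classical
      set a := if b ∈ minreps σ then σ b else b with ha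
      have hasup : a ∈ σ.support := by
        rw [ha]; split
        · exact Equiv.Perm.apply_mem_support.2 hb
        · exact hb
      have hanm : a ∉ minreps σ := by
        rw [ha]; split
        case isTrue hbm =>
          intro hm
          have hscb : σ.SameCycle b (σ b) := sc_step σ b
          have hne : b ≠ σ b := fun he => (Equiv.Perm.mem_support.1 hb) he.symm
          have hle1 : b ≤ σ b := mem_minreps.1 hbm _ hscb
          have hle2 : σ b ≤ b := mem_minreps.1 hm _ hscb.symm
          exact hne (le_antisymm hle1 hle2)
        case isFalse hbm => exact hbm
      have hane : σ a ≠ a := Equiv.Perm.mem_support.1 hasup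
      set σ' := Equiv.swap a (σ a) * σ with hσ'
      -- σ'⁻¹ = σ⁻¹ * swap a (σ a)
      have hinv : σ'⁻¹ = σ⁻¹ * Equiv.swap a (σ a) := inv_swap_mul σ a (σ a)
      -- SameCycle σ' ⊆ SameCycle σ
      have hsub : ∀ u v, σ'.SameCycle u v → σ.SameCycle u v := by
        intro u v huv
        have h2 : (σ⁻¹ * Equiv.swap a (σ a)).SameCycle u v := by
          rw [← hinv]; exact (sameCycle_inv).2 huv
        have h3 : σ⁻¹.SameCycle a (σ a) := (sameCycle_inv).2 (sc_step σ a)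
        exact (sameCycle_inv).1 (sc_subset_of_split h3 h2)
      have hmono : minreps σ ⊆ minreps σ' := minreps_subset hsub
      have hafix : σ' a = a := by
        rw [hσ', Perm.mul_apply, Equiv.swap_apply_right]
      have hamem : a ∈ minreps σ' := by
        rw [mem_minreps]
        intro w hw
        rw [← sc_fixed hafix hw]
      have hssub : insert a (minreps σ) ⊆ minreps σ' := by
        intro u hu
        rcases mem_insert.1 hu with rfl | hu
        · exact hamem
        · exact hmono hu
      have hge : cN σ + 1 ≤ cN σ' := by
        have := card_le_card hssub
        rwa [card_insert_of_notMem hanm] at this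
      have hle : cN σ' ≤ cN σ + 1 := by
        have := join_ineq_left σ a (σ a)
        -- need the other direction: cN σ' ≤ cN σ + 1
        have h4 := join_ineq (σ⁻¹ * Equiv.swap a (σ a)) a (σ a)
        rw [mul_assoc, Equiv.swap_mul_self, mul_one] at h4
        rw [← hinv, cN_inv, cN_inv] at h4
        exact h4
      have hNeq : cN σ' = cN σ + 1 := le_antisymm hle hge
      have hcard : σ'.support.card < σ.support.card :=
        Equiv.Perm.card_support_swap_mul (Equiv.Perm.mem_support.1 hasup)
      obtain ⟨l, hl, hlen, hprod⟩ := ih σ' (by omega)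
      refine ⟨Equiv.swap a (σ a) :: l, ?_, ?_, ?_⟩
      · intro τ hτ
        rcases List.mem_cons.1 hτ with rfl | hτ
        · exact ⟨a, σ a, fun he => hane he.symm, rfl⟩
        · exact hl τ hτ
      · have hn' : cN σ' ≤ n := cN_le σ'
        simp only [List.length_cons, hlen, hNeq]
        omega
      · simp only [List.prod_cons, hprod, hσ', ← mul_assoc, Equiv.swap_mul_self, one_mul]

lemma exists_swaps (σ : Perm (Fin n)) :
    ∃ l : List (Perm (Fin n)), (∀ τ ∈ l, τ.IsSwap) ∧ l.length = n - cN σ ∧ l.prod = σ :=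
  exists_swaps_aux σ.support.card σ le_rfl

lemma cN_prod_swaps : ∀ (l : List (Perm (Fin n))), (∀ τ ∈ l, τ.IsSwap) →
    n ≤ cN l.prod + l.length := by
  intro l
  induction l with
  | nil => intro _; simp [cN_one]
  | cons t l ih =>
    intro hl
    have ht : t.IsSwap := hl t List.mem_cons_self
    obtain ⟨x, y, hxy, rfl⟩ := ht
    have hP := ih (fun τ hτ => hl τ (List.mem_cons_of_mem _ hτ))
    have hstep : cN l.prod ≤ cN (Equiv.swap x y * l.prod) + 1 := join_ineq_left l.prod x y
    simp only [List.prod_cons, List.length_cons]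
    omega

lemma rl_eq (σ : Perm (Fin n)) : rl σ = n - cN σ := by
  unfold rl
  obtain ⟨l, hl, hlen, hprod⟩ := exists_swaps σ
  have hmem : (n - cN σ) ∈ {k | ∃ l : List (Perm (Fin n)),
      (∀ τ ∈ l, τ.IsSwap) ∧ l.length = k ∧ l.prod = σ} := ⟨l, hl, hlen, hprod⟩
  apply le_antisymm
  · exact Nat.sInf_le hmem
  · have hne : {k | ∃ l : List (Perm (Fin n)),
        (∀ τ ∈ l, τ.IsSwap) ∧ l.length = k ∧ l.prod = σ}.Nonempty := ⟨_, hmem⟩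
    obtain ⟨l₀, hl₀, hlen₀, hprod₀⟩ := Nat.sInf_mem hne
    have := cN_prod_swaps l₀ hl₀
    rw [hprod₀] at this
    omega

lemma cN_mul_swaps (σ : Perm (Fin n)) : ∀ (l : List (Perm (Fin n))), (∀ τ ∈ l, τ.IsSwap) →
    cN σ ≤ cN (σ * l.prod) + l.length := by
  intro l
  induction l generalizing σ with
  | nil => intro _; simp
  | cons t l ih =>
    intro hl
    obtain ⟨x, y, hxy, rfl⟩ := hl t List.mem_cons_self
    have h1 : cN σ ≤ cN (σ * Equiv.swap x y) + 1 := join_ineq σ x y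
    have h2 := ih (σ * Equiv.swap x y) (fun τ hτ => hl τ (List.mem_cons_of_mem _ hτ))
    simp only [List.prod_cons, List.length_cons, ← mul_assoc]
    omega

lemma subadd (σ τ : Perm (Fin n)) : cN σ + cN τ ≤ cN (σ * τ) + n := by
  obtain ⟨l, hl, hlen, hprod⟩ := exists_swaps τ
  have := cN_mul_swaps σ l hl
  rw [hprod, hlen] at this
  have := cN_le τ
  omega

lemma sign_eq (σ : Perm (Fin n)) : Equiv.Perm.sign σ = (-1 : ℤˣ) ^ (n - cN σ) := by
  obtain ⟨l, hl, hlen, hprod⟩ := exists_swaps σ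
  conv_lhs => rw [← hprod]
  rw [Equiv.Perm.sign_prod_list_swap hl, hlen]

lemma split_ineq {σ : Perm (Fin n)} {x y : Fin n} (hxy : x ≠ y) (h : σ.SameCycle x y) :
    cN σ + 1 ≤ cN (σ * Equiv.swap x y) := by
  set τ := σ * Equiv.swap x y with hτ
  have hsub : ∀ a b, τ.SameCycle a b → σ.SameCycle a b := fun a b hab =>
    sc_subset_of_split h hab
  have hge : cN σ ≤ cN τ := card_le_card (minreps_subset hsub)
  have hne : cN σ ≠ cN τ := by
    intro heq
    have hs1 : Equiv.Perm.sign τ = Equiv.Perm.sign σ * Equiv.Perm.sign (Equiv.swap x y) := by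
      rw [hτ, map_mul]
    rw [Equiv.Perm.sign_swap hxy] at hs1
    have hs2 : Equiv.Perm.sign τ = Equiv.Perm.sign σ := by
      rw [sign_eq σ, sign_eq τ, heq]
    rw [hs2] at hs1
    have h3 : Equiv.Perm.sign σ * 1 = Equiv.Perm.sign σ * (-1) := by
      rw [mul_one, ← hs1]
    have : (1 : ℤˣ) = -1 := mul_left_cancel h3
    exact absurd this (by decide)
  omega

lemma merge_ineq {σ : Perm (Fin n)} {x y : Fin n} (hxy : x ≠ y) (h : ¬ σ.SameCycle x y) :
    cN (σ * Equiv.swap x y) + 1 ≤ cN σ := by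
  have hmerge := sc_merge hxy h
  have := split_ineq hxy hmerge
  rwa [mul_assoc, Equiv.swap_mul_self, mul_one] at this

lemma split_ineq_left {σ : Perm (Fin n)} {x y : Fin n} (hxy : x ≠ y) (h : σ.SameCycle x y) :
    cN σ + 1 ≤ cN (Equiv.swap x y * σ) := by
  have h' : σ⁻¹.SameCycle x y := sameCycle_inv.2 h
  have := split_ineq hxy h'
  rwa [← inv_swap_mul, cN_inv, cN_inv] at this

end NCW

namespace NCW
variable {n : ℕ}

/-- merge characterization: after merging, same cycle iff same cycle before or both in merged class -/
lemma sc_merged_iff {σ : Perm (Fin n)} {x y : Fin n} (hxy : x ≠ y) (h : ¬ σ.SameCycle x y)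
    (a b : Fin n) : (σ * Equiv.swap x y).SameCycle a b ↔
      (σ.SameCycle a b ∨ ((σ.SameCycle a x ∨ σ.SameCycle a y) ∧ (σ.SameCycle b x ∨ σ.SameCycle b y))) := by
  have hm : (σ * Equiv.swap x y).SameCycle x y := sc_merge hxy h
  constructor
  · exact sc_decomp x y
  · rintro (hab | ⟨ha, hb⟩)
    · exact sc_incl hm hab
    · have key : ∀ z : Fin n, (σ.SameCycle z x ∨ σ.SameCycle z y) →
          (σ * Equiv.swap x y).SameCycle z x := by
        intro z hz
        rcases hz with hz | hz
        · exact sc_incl hm hz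
        · exact (sc_incl hm hz).trans hm.symm
      exact (key a ha).trans (key b hb).symm

/-- in a split, x and y end up in different cycles -/
lemma not_sc_of_split {σ : Perm (Fin n)} {x y : Fin n} (hxy : x ≠ y) (h : σ.SameCycle x y) :
    ¬ (σ * Equiv.swap x y).SameCycle x y := by
  intro hcon
  have h1 := split_ineq hxy h
  have h2 := split_ineq hxy hcon
  rw [mul_assoc, Equiv.swap_mul_self, mul_one] at h2
  omega

/-- in a split, classes not containing x are unchanged -/
lemma sc_split_offB {σ : Perm (Fin n)} {x y : Fin n} (hsc : σ.SameCycle x y)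
    {a b : Fin n} (ha : ¬ σ.SameCycle a x)
    (hab : σ.SameCycle a b) : (σ * Equiv.swap x y).SameCycle a b := by
  set τ := σ * Equiv.swap x y with hτ
  set R : Fin n → Fin n → Prop := fun u v =>
    (τ.SameCycle u v ∧ ¬ σ.SameCycle u x) ∨ (σ.SameCycle u x ∧ σ.SameCycle v x) with hR
  have hsub : ∀ u v, τ.SameCycle u v → σ.SameCycle u v := fun u v huv =>
    sc_subset_of_split hsc huv
  have hequiv : Equivalence R := by
    constructor
    · intro u
      by_cases hu : σ.SameCycle u x
      · exact Or.inr ⟨hu, hu⟩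
      · exact Or.inl ⟨SameCycle.refl _ _, hu⟩
    · rintro u v (⟨h1, h2⟩ | ⟨h1, h2⟩)
      · refine Or.inl ⟨h1.symm, fun hv => h2 ?_⟩
        exact (hsub u v h1).trans hv
      · exact Or.inr ⟨h2, h1⟩
    · rintro u v w (⟨h1, h2⟩ | ⟨h1, h2⟩) (⟨h3, h4⟩ | ⟨h3, h4⟩)
      · exact Or.inl ⟨h1.trans h3, h2⟩
      · exact absurd h3 (fun hv => h2 ((hsub u v h1).trans hv))
      · exact absurd h2 h4
      · exact Or.inr ⟨h1, h4⟩
  have hstep : ∀ z, R z (σ z) := by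
    intro z
    by_cases hz : σ.SameCycle z x
    · exact Or.inr ⟨hz, (sc_step σ z).symm.trans hz⟩
    · refine Or.inl ⟨?_, hz⟩
      have hzx : z ≠ x := fun he => hz (he ▸ SameCycle.refl _ _)
      have hzy : z ≠ y := fun he => hz (he ▸ hsc.symm)
      have : σ z = τ z := by rw [hτ, mul_swap_apply, Equiv.swap_apply_of_ne_of_ne hzx hzy]
      rw [this]
      exact sc_step τ z
  rcases sameCycle_sub hequiv hstep hab with ⟨h1, _⟩ | ⟨h1, _⟩
  · exact h1
  · exact absurd h1 ha

/-- in a split, elements of the class of x stay with x or with y -/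
lemma sc_split_two {σ : Perm (Fin n)} {x y : Fin n} (hxy : x ≠ y) (hsc : σ.SameCycle x y)
    {a : Fin n} (ha : σ.SameCycle a x) :
    (σ * Equiv.swap x y).SameCycle a x ∨ (σ * Equiv.swap x y).SameCycle a y := by
  set τ := σ * Equiv.swap x y with hτ
  by_contra hcon
  push_neg at hcon
  obtain ⟨hax, hay⟩ := hcon
  classical
  -- three distinct τ-classes inside the σ-class of x
  have hτsub : ∀ u v, τ.SameCycle u v → σ.SameCycle u v := fun u v huv =>
    sc_subset_of_split hsc huv
  have hm1 := mu_mem_minreps τ x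
  have hm2 := mu_mem_minreps τ y
  have hm3 := mu_mem_minreps τ a
  have hd12 : mu τ x ≠ mu τ y := by
    intro he
    have h := sc_mu τ x
    rw [he] at h
    exact not_sc_of_split hxy hsc (h.trans (sc_mu τ y).symm)
  have hd13 : mu τ x ≠ mu τ a := by
    intro he
    have h := sc_mu τ a
    rw [← he] at h
    exact hax (h.trans (sc_mu τ x).symm)
  have hd23 : mu τ y ≠ mu τ a := by
    intro he
    have h := sc_mu τ a
    rw [← he] at h
    exact hay (h.trans (sc_mu τ y).symm)
  -- each mu is σ-same-cycle with x
  have hσ1 : σ.SameCycle (mu τ x) x := (hτsub _ _ (sc_mu τ x)).symm.trans (SameCycle.refl _ _)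
  have hσ2 : σ.SameCycle (mu τ y) x := (hτsub _ _ (sc_mu τ y)).symm.trans hsc.symm
  have hσ3 : σ.SameCycle (mu τ a) x := (hτsub _ _ (sc_mu τ a)).symm.trans ha
  -- minreps σ ⊆ minreps τ
  have hmono : minreps σ ⊆ minreps τ := minreps_subset hτsub
  -- at most one of the three mus lies in minreps σ
  have hatmost : ∀ u v : Fin n, u ∈ minreps σ → v ∈ minreps σ →
      σ.SameCycle u x → σ.SameCycle v x → u = v := by
    intro u v hu hv hux hvx
    exact minreps_unique hu hv (hux.trans hvx.symm)
  -- pick two of the three not in minreps σ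
  have hpick : ∃ u v : Fin n, u ≠ v ∧ u ∉ minreps σ ∧ v ∉ minreps σ ∧
      u ∈ minreps τ ∧ v ∈ minreps τ := by
    by_cases h1 : mu τ x ∈ minreps σ
    · refine ⟨mu τ y, mu τ a, hd23, ?_, ?_, hm2, hm3⟩
      · intro hc; exact hd12 (hatmost _ _ h1 hc hσ1 hσ2)
      · intro hc; exact hd13 (hatmost _ _ h1 hc hσ1 hσ3)
    · by_cases h2 : mu τ y ∈ minreps σ
      · refine ⟨mu τ x, mu τ a, hd13, h1, ?_, hm1, hm3⟩
        intro hc; exact hd23 (hatmost _ _ h2 hc hσ2 hσ3)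
      · exact ⟨mu τ x, mu τ y, hd12, h1, h2, hm1, hm2⟩
  obtain ⟨u, v, huv, hu1, hv1, hu2, hv2⟩ := hpick
  have hsub2 : insert u (insert v (minreps σ)) ⊆ minreps τ := by
    intro z hz
    rcases mem_insert.1 hz with rfl | hz
    · exact hu2
    rcases mem_insert.1 hz with rfl | hz
    · exact hv2
    · exact hmono hz
  have hcard : cN σ + 2 ≤ cN τ := by
    have h1 : (insert u (insert v (minreps σ))).card = cN σ + 2 := by
      rw [card_insert_of_notMem, card_insert_of_notMem hv1]
      · rfl
      · intro hc
        rcases mem_insert.1 hc with he | hc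
        · exact huv he
        · exact hu1 hc
    have h2 := card_le_card hsub2
    have h3 : cN τ = (minreps τ).card := rfl
    have h4 : cN σ = (minreps σ).card := rfl
    omega
  have hji := join_ineq τ x y
  rw [hτ, mul_assoc, Equiv.swap_mul_self, mul_one, ← hτ] at hji
  omega

end NCW

namespace NCW
variable {n : ℕ}

def NCr (σ : Perm (Fin n)) : Prop :=
  ∀ a b c d : Fin n, a < b → b < c → c < d →
    σ.SameCycle a c → σ.SameCycle b d → σ.SameCycle a b

def Incr (σ : Perm (Fin n)) : Prop :=
  ∀ a : Fin n, σ a ≠ a →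
    ((a < σ a ∧ ∀ b, σ.SameCycle a b → a < b → σ a ≤ b) ∨
     (σ a < a ∧ ∀ b, σ.SameCycle a b → σ a ≤ b ∧ b ≤ a))

/-- crossing the chord boundary is impossible for foreign classes -/
lemma side_offB {σ : Perm (Fin n)} (hnc : NCr σ) {x y u v : Fin n} (hxy : x < y)
    (hB : σ.SameCycle x y) (hu : ¬ σ.SameCycle u x) (huv : σ.SameCycle u v)
    (huI : x < u ∧ u ≤ y) (hvI : ¬ (x < v ∧ v ≤ y)) : False := by
  have huy : u ≠ y := fun he => hu (he ▸ hB.symm)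
  have hulty : u < y := lt_of_le_of_ne huI.2 huy
  rcases not_and_or.1 hvI with hv | hv
  · -- v ≤ x
    have hvlex : v ≤ x := not_lt.1 hv
    have hvnex : v ≠ x := fun he => hu (huv.trans (he ▸ SameCycle.refl _ _))
    have hvltx : v < x := lt_of_le_of_ne hvlex hvnex
    have := hnc v x u y hvltx huI.1 hulty huv.symm hB
    exact hu (huv.trans this)
  · -- y < v
    have hvgty : y < v := not_le.1 hv
    have := hnc x u y v huI.1 hulty hvgty hB huv
    exact hu this.symm

/-- each point stays on its side of the chord (x,y] after splitting -/
lemma side_step {σ : Perm (Fin n)} (hnc : NCr σ) (hinc : Incr σ) {x y : Fin n} (hxy : x < y)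
    (hB : σ.SameCycle x y) (z : Fin n) :
    ((x < z ∧ z ≤ y) ↔ (x < (σ * Equiv.swap x y) z ∧ (σ * Equiv.swap x y) z ≤ y)) := by
  have hxyne : x ≠ y := ne_of_lt hxy
  have hmoves : ∀ w, σ.SameCycle w x → σ w ≠ w := by
    intro w hw hfix
    have h1 : w = x := sc_fixed hfix hw
    have h2 : w = y := sc_fixed hfix (hw.trans hB)
    exact hxyne (h1 ▸ h2)
  by_cases hzB : σ.SameCycle z x
  · -- z in the chord class
    rcases eq_or_ne z x with rfl | hzx
    · -- z = x : σ' x = σ y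
      have hval : (σ * Equiv.swap z y) z = σ y := by
        rw [mul_swap_apply, Equiv.swap_apply_left]
      rw [hval]
      apply iff_of_false (fun hc => lt_irrefl z hc.1)
      rcases hinc y (hmoves y hB.symm) with ⟨h1, hcy⟩ | ⟨h1, hcy⟩
      · intro hc
        exact absurd hc.2 (not_le.2 h1)
      · intro hc
        exact absurd hc.1 (not_lt.2 (hcy z hB.symm).1)
    rcases eq_or_ne z y with rfl | hzy
    · -- z = y : σ' y = σ x
      have hval : (σ * Equiv.swap x z) z = σ x := by
        rw [mul_swap_apply, Equiv.swap_apply_right]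
      rw [hval]
      apply iff_of_true ⟨hxy, le_refl z⟩
      rcases hinc x (hmoves x (SameCycle.refl _ _)) with ⟨h1, hcx⟩ | ⟨h1, hcx⟩
      · exact ⟨h1, hcx z hB hxy⟩
      · exact absurd ((hcx z hB).2) (not_le.2 hxy)
    · -- z in class, z ≠ x, z ≠ y
      have hval : (σ * Equiv.swap x y) z = σ z := by
        rw [mul_swap_apply, Equiv.swap_apply_of_ne_of_ne hzx hzy]
      rw [hval]
      by_cases hzI : x < z ∧ z ≤ y
      · -- z strictly inside: x < z < y
        have hzlty : z < y := lt_of_le_of_ne hzI.2 hzy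
        apply iff_of_true hzI
        rcases hinc z (hmoves z hzB) with ⟨h1, hcz⟩ | ⟨h1, hcz⟩
        · exact ⟨lt_trans hzI.1 h1, hcz y (hzB.trans hB) hzlty⟩
        · exact absurd ((hcz y (hzB.trans hB)).2) (not_le.2 hzlty)
      · apply iff_of_false hzI
        rcases not_and_or.1 hzI with hz | hz
        · -- z ≤ x, in fact z < x
          have hzltx : z < x := lt_of_le_of_ne (not_lt.1 hz) hzx
          rcases hinc z (hmoves z hzB) with ⟨h1, hcz⟩ | ⟨h1, hcz⟩
          · intro hc
            exact absurd (hcz x hzB hzltx) (not_le.2 hc.1)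
          · intro hc
            exact absurd ((hcz x hzB).2) (not_le.2 hzltx)
        · -- y < z
          have hzgty : y < z := not_le.1 hz
          rcases hinc z (hmoves z hzB) with ⟨h1, hcz⟩ | ⟨h1, hcz⟩
          · intro hc
            exact absurd hc.2 (not_le.2 (lt_trans hzgty h1))
          · intro hc
            exact absurd hc.1 (not_lt.2 (hcz x hzB).1)
  · -- z not in the chord class
    have hzx : z ≠ x := fun he => hzB (he ▸ SameCycle.refl _ _)
    have hzy : z ≠ y := fun he => hzB (he ▸ hB.symm)
    have hval : (σ * Equiv.swap x y) z = σ z := by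
      rw [mul_swap_apply, Equiv.swap_apply_of_ne_of_ne hzx hzy]
    rw [hval]
    constructor
    · intro hzI
      by_contra hvI
      exact side_offB hnc hxy hB hzB (sc_step σ z) hzI hvI
    · intro hvI
      by_contra hzI
      have hσzB : ¬ σ.SameCycle (σ z) x := fun hc => hzB ((sc_step σ z).trans hc)
      exact side_offB hnc hxy hB hσzB (sc_step σ z).symm hvI hzI

/-- same σ'-cycle implies same side -/
lemma side_sc {σ : Perm (Fin n)} (hnc : NCr σ) (hinc : Incr σ) {x y : Fin n} (hxy : x < y)
    (hB : σ.SameCycle x y) {a b : Fin n} (hab : (σ * Equiv.swap x y).SameCycle a b) :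
    ((x < a ∧ a ≤ y) ↔ (x < b ∧ b ≤ y)) := by
  refine sameCycle_sub (R := fun u v => ((x < u ∧ u ≤ y) ↔ (x < v ∧ v ≤ y)))
    ⟨fun _ => Iff.rfl, Iff.symm, Iff.trans⟩ ?_ hab
  intro z
  exact side_step hnc hinc hxy hB z

/-- splitting an increasing noncrossing permutation along a chord preserves NC + increasing -/
lemma split_preserves {σ : Perm (Fin n)} {x y : Fin n} (hxy : x < y)
    (hB : σ.SameCycle x y) (hnc : NCr σ) (hinc : Incr σ) :
    NCr (σ * Equiv.swap x y) ∧ Incr (σ * Equiv.swap x y) := by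
  have hxyne : x ≠ y := ne_of_lt hxy
  set τ := σ * Equiv.swap x y with hτ
  have hsub : ∀ a b, τ.SameCycle a b → σ.SameCycle a b := fun a b hab =>
    sc_subset_of_split hB hab
  have hmoves : ∀ w, σ.SameCycle w x → σ w ≠ w := by
    intro w hw hfix
    have h1 : w = x := sc_fixed hfix hw
    have h2 : w = y := sc_fixed hfix (hw.trans hB)
    exact hxyne (h1 ▸ h2)
  -- same side ∧ in class → same τ-class
  have hsame : ∀ a b : Fin n, σ.SameCycle a x → σ.SameCycle b x →
      ((x < a ∧ a ≤ y) ↔ (x < b ∧ b ≤ y)) → τ.SameCycle a b := by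
    intro a b ha hb hside
    have hyI : x < y ∧ y ≤ y := ⟨hxy, le_refl y⟩
    have hxI : ¬ (x < x ∧ x ≤ y) := fun hc => lt_irrefl x hc.1
    have h2a := sc_split_two hxyne hB ha
    have h2b := sc_split_two hxyne hB hb
    rcases h2a with h2a | h2a <;> rcases h2b with h2b | h2b
    · exact h2a.trans h2b.symm
    · -- a with x, b with y: different sides, contradiction
      exfalso
      have hsa := side_sc hnc hinc hxy hB h2a
      have hsb := side_sc hnc hinc hxy hB h2b
      have hIb : x < b ∧ b ≤ y := hsb.2 hyI
      have hnIa : ¬ (x < a ∧ a ≤ y) := fun hc => hxI (hsa.1 hc)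
      exact hnIa (hside.2 hIb)
    · exfalso
      have hsa := side_sc hnc hinc hxy hB h2a
      have hsb := side_sc hnc hinc hxy hB h2b
      have hIa : x < a ∧ a ≤ y := hsa.2 hyI
      have hnIb : ¬ (x < b ∧ b ≤ y) := fun hc => hxI (hsb.1 hc)
      exact hnIb (hside.1 hIa)
    · exact h2a.trans h2b.symm
  constructor
  · -- NC
    intro a b c d h1 h2 h3 hac hbd
    have hac' : σ.SameCycle a c := hsub _ _ hac
    have hbd' : σ.SameCycle b d := hsub _ _ hbd
    have hab' : σ.SameCycle a b := hnc a b c d h1 h2 h3 hac' hbd'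
    by_cases haB : σ.SameCycle a x
    · have hbB : σ.SameCycle b x := hab'.symm.trans haB
      apply hsame a b haB hbB
      have hsac := side_sc hnc hinc hxy hB hac
      have hsbd := side_sc hnc hinc hxy hB hbd
      by_cases hIa : x < a ∧ a ≤ y <;> by_cases hIb : x < b ∧ b ≤ y
      · exact iff_of_true hIa hIb
      · -- a inside, b outside: impossible
        exfalso
        have hIc := hsac.1 hIa
        rcases not_and_or.1 hIb with hb' | hb'
        · exact absurd (lt_trans hIa.1 h1) hb'
        · have hylt : y < b := not_le.1 hb'
          exact absurd hIc.2 (not_le.2 (lt_trans hylt h2))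
      · exfalso
        have hId := hsbd.1 hIb
        rcases not_and_or.1 hIa with ha' | ha'
        · have hIcn : ¬ (x < c ∧ c ≤ y) := fun hcc => ha' (hsac.2 hcc).1
          rcases not_and_or.1 hIcn with hc' | hc'
          · exact absurd (lt_trans hIb.1 h2) hc'
          · exact absurd hId.2 (not_le.2 (lt_trans (not_le.1 hc') h3))
        · exact absurd (lt_of_le_of_lt hIb.2 (not_le.1 ha')) (not_lt.2 (le_of_lt h1))
      · exact iff_of_false hIa hIb
    · -- a not in chord class: transfer
      exact sc_split_offB hB haB hab'
  · -- Incr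
    intro a hfix
    rcases eq_or_ne a x with rfl | hax
    · -- a = x : τ x = σ y
      have hval : τ a = σ y := by
        rw [hτ, mul_swap_apply, Equiv.swap_apply_left]
      rcases hinc y (hmoves y hB.symm) with ⟨h1, hcy⟩ | ⟨h1, hcy⟩
      · -- y < σ y : case 1 for τ at x
        left
        rw [hval]
        refine ⟨lt_trans hxy h1, ?_⟩
        intro b hb hab
        have hbnI : ¬ (a < b ∧ b ≤ y) := by
          intro hc
          have hside := side_sc hnc hinc hxy hB hb
          exact absurd (hside.2 hc).1 (lt_irrefl a)
        rcases not_and_or.1 hbnI with hb' | hb'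
        · exact absurd hab hb'
        · exact hcy b (hB.symm.trans (hsub _ _ hb)) (not_le.1 hb')
      · -- σ y < y, y is max: case 2 for τ at x
        right
        rw [hval]
        have hsyx : σ y ≤ a := (hcy a hB.symm).1
        have hsylt : σ y < a := lt_of_le_of_ne hsyx (by
          intro he
          apply hfix
          rw [hval, he])
        refine ⟨hsylt, ?_⟩
        intro b hb
        have hbB : σ.SameCycle y b := hB.symm.trans (hsub _ _ hb)
        refine ⟨(hcy b hbB).1, ?_⟩
        -- b ≤ a: b is on a's side
        have hbnI : ¬ (a < b ∧ b ≤ y) := by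
          intro hc
          have hside := side_sc hnc hinc hxy hB hb
          exact absurd (hside.2 hc).1 (lt_irrefl a)
        rcases not_and_or.1 hbnI with hb' | hb'
        · exact not_lt.1 hb'
        · exact absurd (hcy b hbB).2 hb'
    rcases eq_or_ne a y with rfl | hay
    · -- a = y : τ y = σ x
      have hval : τ a = σ x := by
        rw [hτ, mul_swap_apply, Equiv.swap_apply_right]
      rcases hinc x (hmoves x (SameCycle.refl _ _)) with ⟨h1, hcx⟩ | ⟨h1, hcx⟩
      · -- x < σ x ≤ y
        have hsxy : σ x ≤ a := hcx a hB hxy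
        have hsxlt : σ x < a := lt_of_le_of_ne hsxy (by
          intro he
          apply hfix
          rw [hval, he])
        right
        rw [hval]
        refine ⟨hsxlt, ?_⟩
        intro b hb
        have hbB : σ.SameCycle b x := (hsub _ _ hb).symm.trans hB.symm
        have hbI : x < b ∧ b ≤ a := by
          have hside := side_sc hnc hinc hxy hB hb
          exact hside.1 ⟨hxy, le_refl a⟩
        exact ⟨hcx b hbB.symm hbI.1, hbI.2⟩
      · -- σ x < x and x is max of class: impossible since y > x in class
        exact absurd (hcx a hB).2 (not_le.2 hxy)
    · -- generic a : τ a = σ a, conditions transfer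
      have hval : τ a = σ a := by
        rw [hτ, mul_swap_apply, Equiv.swap_apply_of_ne_of_ne hax hay]
      have hfix' : σ a ≠ a := by rw [← hval]; exact hfix
      rcases hinc a hfix' with ⟨h1, hc⟩ | ⟨h1, hc⟩
      · left
        rw [hval]
        exact ⟨h1, fun b hb hab => hc b (hsub _ _ hb) hab⟩
      · right
        rw [hval]
        exact ⟨h1, fun b hb => hc b (hsub _ _ hb)⟩

end NCW

namespace NCW
variable {n : ℕ}

/-- merging the class of x with the adjacent class of m = x+1 preserves NC + increasing -/
lemma merge_preserves {σ : Perm (Fin n)} (hnc : NCr σ) (hinc : Incr σ)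
    {x m : Fin n} (hm : m ∈ minreps σ) (hx1 : (x : ℕ) + 1 = (m : ℕ))
    (hxm : ¬ σ.SameCycle x m) :
    NCr (σ * Equiv.swap x (σ⁻¹ m)) ∧ Incr (σ * Equiv.swap x (σ⁻¹ m)) := by
  classical
  set w := σ⁻¹ m with hw
  have hσw : σ w = m := by rw [hw]; exact σ.apply_symm_apply m
  have hwm : σ.SameCycle w m := by rw [← hσw]; exact sc_step σ w
  have hxw : ¬ σ.SameCycle x w := fun h => hxm (h.trans hwm)
  have hxwne : x ≠ w := fun he => hxw (he ▸ SameCycle.refl _ _)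
  have hxltm : x < m := by rw [Fin.lt_def]; omega
  have hmmin : ∀ b, σ.SameCycle m b → m ≤ b := mem_minreps.1 hm
  set τ := σ * Equiv.swap x w with hτ
  have hτx : τ x = m := by rw [hτ, mul_swap_apply, Equiv.swap_apply_left, hσw]
  have hτw : τ w = σ x := by rw [hτ, mul_swap_apply, Equiv.swap_apply_right]
  have hτz : ∀ z, z ≠ x → z ≠ w → τ z = σ z := by
    intro z h1 h2
    rw [hτ, mul_swap_apply, Equiv.swap_apply_of_ne_of_ne h1 h2]
  have hiff : ∀ a b : Fin n, τ.SameCycle a b ↔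
      (σ.SameCycle a b ∨ ((σ.SameCycle a x ∨ σ.SameCycle a w) ∧ (σ.SameCycle b x ∨ σ.SameCycle b w))) :=
    sc_merged_iff hxwne hxw
  -- everything in the class of w lies above x (indeed ≥ m)
  have hA : ∀ b, σ.SameCycle b w → m ≤ b := by
    intro b hb
    exact hmmin b ((hb.trans hwm).symm)
  have hA' : ∀ b, σ.SameCycle b w → x < b := fun b hb => lt_of_lt_of_le hxltm (hA b hb)
  -- Q1 extraction: if some element of x's class is above x, then x < σ x with min property
  have hQ1 : ∀ b, σ.SameCycle b x → x < b →
      (x < σ x ∧ ∀ c, σ.SameCycle x c → x < c → σ x ≤ c) := by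
    intro b hb hxb
    by_cases hxfix : σ x = x
    · exact absurd (sc_fixed hxfix hb.symm).symm (ne_of_gt hxb)
    rcases hinc x hxfix with ⟨h1, hc⟩ | ⟨h1, hc⟩
    · exact ⟨h1, hc⟩
    · exact absurd (hc b hb.symm).2 (not_le.2 hxb)
  -- P1 extraction: if not Q1 situation, the class of x is all ≤ x with σ x ≤ everything
  have hP1 : (¬ x < σ x) → ∀ b, σ.SameCycle b x → (σ x ≤ b ∧ b ≤ x) := by
    intro hnq b hb
    by_cases hxfix : σ x = x
    · have : x = b := sc_fixed hxfix hb.symm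
      rw [← this, hxfix]
      exact ⟨le_refl x, le_refl x⟩
    rcases hinc x hxfix with ⟨h1, hc⟩ | ⟨h1, hc⟩
    · exact absurd h1 hnq
    · exact hc b hb.symm
  -- C: in the Q1 case, the class of w lies strictly below σ x
  have hC : (x < σ x) → ∀ b, σ.SameCycle b w → b < σ x := by
    intro hq b hb
    have hxb : x < b := hA' b hb
    have hbne : b ≠ σ x := by
      intro he
      exact hxw (((sc_step σ x).trans (he ▸ hb)).symm.symm)
    have hmne : m ≠ σ x := by
      intro he
      exact hxm ((sc_step σ x).trans (he ▸ SameCycle.refl _ _)).symm.symm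
    rcases lt_trichotomy b (σ x) with h | h | h
    · exact h
    · exact absurd h hbne
    · -- σ x < b : crossing (x, m, σ x, b)
      exfalso
      have hmlt : m < σ x := by
        have : m ≤ σ x := by
          rw [Fin.le_def]
          rw [Fin.lt_def] at hq
          omega
        exact lt_of_le_of_ne this hmne
      have hmb : σ.SameCycle m b := (hb.trans hwm).symm
      have := hnc x m (σ x) b hxltm hmlt h (sc_step σ x) hmb
      exact hxm this
  have hwmax : ∀ b, σ.SameCycle b w → b ≤ w := by
    intro b hb
    by_cases hwfix : σ w = w
    · exact le_of_eq (sc_fixed hwfix hb.symm).symm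
    rcases hinc w hwfix with ⟨h1, hc⟩ | ⟨h1, hc⟩
    · -- w < σ w = m but m ≤ w: absurd
      exact absurd (lt_of_lt_of_le (hσw ▸ h1) (hA w (SameCycle.refl _ _))) (lt_irrefl w)
    · exact (hc b hb.symm).2
  constructor
  · -- NC for τ
    intro a b c d h1 h2 h3 hac hbd
    rcases (hiff a c).1 hac with hac' | ⟨haD, hcD⟩
    · -- a ~σ c
      rcases (hiff b d).1 hbd with hbd' | ⟨hbD, hdD⟩
      · exact (hiff a b).2 (Or.inl (hnc a b c d h1 h2 h3 hac' hbd'))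
      · -- b, d ∈ D
        by_cases haD : σ.SameCycle a x ∨ σ.SameCycle a w
        · exact (hiff a b).2 (Or.inr ⟨haD, hbD⟩)
        push_neg at haD
        obtain ⟨hax, haw⟩ := haD
        -- helper: a is not σ-related to anything in D
        have hanotD : ∀ z, (σ.SameCycle z x ∨ σ.SameCycle z w) → ¬ σ.SameCycle a z := by
          rintro z (hz | hz) haz
          · exact hax (haz.trans hz)
          · exact haw (haz.trans hz)
        have hcx : c ≠ x := fun he => hax (he ▸ hac')
        have hcm : ¬ σ.SameCycle c w → True := fun _ => trivial
        rcases hbD with hbx | hbw <;> rcases hdD with hdx | hdw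
        · -- b, d both in class of x
          exact (hiff a b).2 (Or.inl (hnc a b c d h1 h2 h3 hac' (hbx.trans hdx.symm)))
        · -- b in class x, d in class w : contradiction
          exfalso
          have hxd : x < d := hA' d hdw
          rcases lt_trichotomy b x with hbltx | hbeqx | hbgtx
          · -- b < x : subcases on c vs x
            rcases lt_trichotomy c x with hcltx | hceq | hcgtx
            · exact hanotD b (Or.inl hbx) (hnc a b c x h1 h2 hcltx hac' hbx)
            · exact hcx hceq
            · -- c > x hence c ≥ m; c ≠ m; so c > m : pattern (a, m, c, d)
              have hcnem : c ≠ m := fun he => hanotD c (Or.inr (he ▸ hwm.symm)) hac'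
              have hcm' : m < c := by
                rw [Fin.lt_def] at hcgtx ⊢
                rcases Fin.lt_or_lt_of_ne hcnem with h | h
                · rw [Fin.lt_def] at h; omega
                · rw [Fin.lt_def] at h; omega
              have halm : a < m := lt_of_lt_of_le (lt_trans h1 hbltx) (le_of_lt hxltm)
              have hmd : σ.SameCycle m d := (hdw.trans hwm).symm
              exact hanotD m (Or.inr hwm.symm) (hnc a m c d halm hcm' h3 hac' hmd)
          · -- b = x or b > x handled together below
            rcases lt_trichotomy a x with haltx | haeq | hagtx
            · have hcgtx : x < c := by rw [← hbeqx]; exact h2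
              have hcnem : c ≠ m := fun he => hanotD c (Or.inr (he ▸ hwm.symm)) hac'
              have hcm' : m < c := by
                have : m ≤ c := by
                  rw [Fin.le_def]; rw [Fin.lt_def] at hcgtx; omega
                exact lt_of_le_of_ne this (Ne.symm hcnem)
              have halm : a < m := lt_trans haltx hxltm
              have hmd : σ.SameCycle m d := (hdw.trans hwm).symm
              exact hanotD m (Or.inr hwm.symm) (hnc a m c d halm hcm' h3 hac' hmd)
            · exact hax (haeq ▸ SameCycle.refl _ _)
            · exact hax (hnc x a b c hagtx h1 h2 hbx.symm hac').symm
          · -- b > x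
            rcases lt_trichotomy a x with haltx | haeq | hagtx
            · -- a < x : pattern (a, m, c, d) needs m < c
              have hcgtx : x < c := lt_trans hbgtx h2
              have hcnem : c ≠ m := fun he => hanotD c (Or.inr (he ▸ hwm.symm)) hac'
              have hcm' : m < c := by
                have : m ≤ c := by
                  rw [Fin.le_def]; rw [Fin.lt_def] at hcgtx; omega
                exact lt_of_le_of_ne this (Ne.symm hcnem)
              have halm : a < m := lt_trans haltx hxltm
              have hmd : σ.SameCycle m d := (hdw.trans hwm).symm
              exact hanotD m (Or.inr hwm.symm) (hnc a m c d halm hcm' h3 hac' hmd)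
            · exact hax (haeq ▸ SameCycle.refl _ _)
            · -- x < a : pattern (x, a, b, c)
              exact hax (hnc x a b c hagtx h1 h2 hbx.symm hac').symm
        · -- b in class w, d in class x : contradiction
          exfalso
          have hxb : x < b := hA' b hbw
          rcases lt_trichotomy a x with haltx | haeq | hagtx
          · -- a < x : pattern (a, x, c, d)
            have hxc : x < c := lt_trans hxb h2
            exact hax (hnc a x c d haltx hxc h3 hac' hdx.symm)
          · exact hax (haeq ▸ SameCycle.refl _ _)
          · -- x < a : pattern (m, a, b, c)
            have hanem : a ≠ m := fun he => hanotD a (Or.inr (he ▸ hwm.symm)) (SameCycle.refl _ _)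
            have hma : m < a := by
              have : m ≤ a := by
                rw [Fin.le_def]; rw [Fin.lt_def] at hagtx; omega
              exact lt_of_le_of_ne this (Ne.symm hanem)
            have hmb : σ.SameCycle m b := (hbw.trans hwm).symm
            exact hanotD m (Or.inr hwm.symm) (hnc m a b c hma h1 h2 hmb hac').symm
        · -- b, d both in class of w
          exact (hiff a b).2 (Or.inl (hnc a b c d h1 h2 h3 hac' (hbw.trans hdw.symm)))
    · -- a, c ∈ D
      rcases (hiff b d).1 hbd with hbd' | ⟨hbD, hdD⟩
      · by_cases hbDq : σ.SameCycle b x ∨ σ.SameCycle b w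
        · exact (hiff a b).2 (Or.inr ⟨haD, hbDq⟩)
        push_neg at hbDq
        obtain ⟨hbx, hbw⟩ := hbDq
        have hbnotD : ∀ z, (σ.SameCycle z x ∨ σ.SameCycle z w) → ¬ σ.SameCycle b z := by
          rintro z (hz | hz) hbz
          · exact hbx (hbz.trans hz)
          · exact hbw (hbz.trans hz)
        rcases haD with hax | haw <;> rcases hcD with hcx | hcw
        · exact (hiff a b).2 (Or.inl (hnc a b c d h1 h2 h3 (hax.trans hcx.symm) hbd'))
        · -- a in class x, c in class w
          exfalso
          have hxc : x < c := hA' c hcw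
          rcases lt_trichotomy b x with hbltx | hbeq | hbgtx
          · -- b < x : pattern (a, b, x, d)
            have hxd : x < d := lt_trans hxc h3
            exact hbnotD a (Or.inl hax) (hnc a b x d h1 hbltx hxd hax hbd').symm
          · exact hbx (hbeq ▸ SameCycle.refl _ _)
          · -- b > x, b ≠ m so b > m : pattern (m, b, c, d)
            have hbnem : b ≠ m := fun he => hbnotD b (Or.inr (he ▸ hwm.symm)) (SameCycle.refl _ _)
            have hmb : m < b := by
              have : m ≤ b := by
                rw [Fin.le_def]; rw [Fin.lt_def] at hbgtx; omega
              exact lt_of_le_of_ne this (Ne.symm hbnem)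
            have hmc : σ.SameCycle m c := (hcw.trans hwm).symm
            exact hbnotD m (Or.inr hwm.symm) (hnc m b c d hmb h2 h3 hmc hbd').symm
        · -- a in class w, c in class x : pattern (x, b, c, d)
          exfalso
          have hxa : x < a := hA' a haw
          have hxb : x < b := lt_trans hxa h1
          exact hbnotD x (Or.inl (SameCycle.refl _ _)) (hnc x b c d hxb h2 h3 hcx.symm hbd').symm
        · exact (hiff a b).2 (Or.inl (hnc a b c d h1 h2 h3 (haw.trans hcw.symm) hbd'))
      · exact (hiff a b).2 (Or.inr ⟨haD, hbD⟩)
  · -- Incr for τ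
    intro a hfix
    by_cases haD : σ.SameCycle a x ∨ σ.SameCycle a w
    · -- a in merged class D; class of a under τ is D
      have hclass : ∀ b, τ.SameCycle a b → (σ.SameCycle b x ∨ σ.SameCycle b w) := by
        intro b hb
        rcases (hiff a b).1 hb with hb' | ⟨_, hbD⟩
        · rcases haD with h | h
          · exact Or.inl (hb'.symm.trans h)
          · exact Or.inr (hb'.symm.trans h)
        · exact hbD
      rcases eq_or_ne a x with rfl | hax
      · -- a = x : τ x = m, go up to m
        left
        rw [hτx]
        refine ⟨hxltm, ?_⟩
        intro b hb hab
        rcases hclass b hb with hbx | hbw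
        · -- b in class of a=x above a : Q1
          obtain ⟨hq, hqc⟩ := hQ1 b hbx hab
          have : m ≤ σ a := by
            rw [Fin.le_def]; rw [Fin.lt_def] at hq; omega
          exact le_trans this (hqc b hbx.symm hab)
        · exact hA b hbw
      rcases eq_or_ne a w with rfl | haw
      · -- a = w : τ w = σ x
        rw [hτw] at hfix ⊢
        by_cases hq : x < σ x
        · -- Q1 : go up
          left
          have hwlt : w < σ x := hC hq w (SameCycle.refl _ _)
          refine ⟨hwlt, ?_⟩
          intro b hb hab
          rcases hclass b hb with hbx | hbw
          · -- b in class of x, b > w ≥ m > x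
            have hxb : x < b := by
              have h1 := hA w (SameCycle.refl _ _)
              rw [Fin.lt_def] at hab hxltm ⊢
              rw [Fin.le_def] at h1
              omega
            exact (hQ1 b hbx hxb).2 b hbx.symm hxb
          · exact absurd (hwmax b hbw) (not_le.2 hab)
        · -- P1 : σ x ≤ x, go down to σ x
          right
          have hp := hP1 hq
          have hsxx : σ x ≤ x := (hp x (SameCycle.refl _ _)).1
          have hxlta : x < w := hA' w (SameCycle.refl _ _)
          refine ⟨lt_of_le_of_lt hsxx hxlta, ?_⟩
          intro b hb
          rcases hclass b hb with hbx | hbw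
          · have h2 := hp b hbx
            exact ⟨h2.1, le_trans h2.2 (le_of_lt hxlta)⟩
          · refine ⟨le_trans hsxx (le_of_lt (hA' b hbw)), hwmax b hbw⟩
      · -- generic a ∈ D
        have hτa : τ a = σ a := hτz a hax haw
        rw [hτa] at hfix ⊢
        rcases haD with haB1 | haB2
        · -- a in class of x
          rcases hinc a hfix with ⟨h1, hc⟩ | ⟨h1, hc⟩
          · left
            refine ⟨h1, ?_⟩
            intro b hb hab
            rcases hclass b hb with hbx | hbw
            · exact hc b (haB1.trans hbx.symm) hab
            · -- b in class of w
              rcases lt_trichotomy a x with haltx | haeq | hagtx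
              · exact le_trans (hc x haB1 haltx) (le_of_lt (hA' b hbw))
              · exact absurd haeq hax
              · -- x < a : b < σ x ≤ a < b absurd
                obtain ⟨hq, hqc⟩ := hQ1 a haB1 hagtx
                have hble := hC hq b hbw
                have := hqc a haB1.symm hagtx
                exact absurd (lt_of_lt_of_le hble this) (not_lt.2 (le_of_lt hab))
          · right
            -- a is max of class of x; x < a
            have hxlea : x ≤ a := (hc x haB1).2
            have hxlta : x < a := lt_of_le_of_ne hxlea (Ne.symm hax)
            obtain ⟨hq, hqc⟩ := hQ1 a haB1 hxlta
            refine ⟨h1, ?_⟩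
            intro b hb
            rcases hclass b hb with hbx | hbw
            · exact hc b (haB1.trans hbx.symm)
            · constructor
              · exact le_trans (hc x haB1).1 (le_of_lt (hA' b hbw))
              · exact le_trans (le_of_lt (hC hq b hbw)) (hqc a haB1.symm hxlta)
        · -- a in class of w, a ≠ w
          rcases hinc a hfix with ⟨h1, hc⟩ | ⟨h1, hc⟩
          · left
            refine ⟨h1, ?_⟩
            intro b hb hab
            rcases hclass b hb with hbx | hbw
            · -- b in class of x with b > a > x : Q1, σ a < σ x ≤ b
              have hxa : x < a := hA' a haB2
              have hxb : x < b := lt_trans hxa hab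
              obtain ⟨hq, hqc⟩ := hQ1 b hbx hxb
              have hσa : σ.SameCycle (σ a) w := (sc_step σ a).symm.trans haB2
              exact le_trans (le_of_lt (hC hq (σ a) hσa)) (hqc b hbx.symm hxb)
            · exact hc b (haB2.trans hbw.symm) hab
          · -- a would be max of class of w, forcing a = w
            exfalso
            have ham : σ.SameCycle a m := haB2.trans hwm
            have h2 : σ a ≤ m := (hc m ham).1
            have h3 : m ≤ σ a := hmmin (σ a) (ham.symm.trans (sc_step σ a))
            have h4 : σ a = m := le_antisymm h2 h3
            exact haw (σ.injective (by rw [h4, hσw]))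
    · -- a outside D : unchanged
      push_neg at haD
      obtain ⟨hax, haw⟩ := haD
      have haxne : a ≠ x := fun he => hax (he ▸ SameCycle.refl _ _)
      have hawne : a ≠ w := fun he => haw (he ▸ SameCycle.refl _ _)
      have hτa : τ a = σ a := hτz a haxne hawne
      rw [hτa] at hfix ⊢
      have hclass : ∀ b, τ.SameCycle a b → σ.SameCycle a b := by
        intro b hb
        rcases (hiff a b).1 hb with hb' | ⟨hD, _⟩
        · exact hb'
        · rcases hD with h | h
          · exact absurd h hax
          · exact absurd h haw
      rcases hinc a hfix with ⟨h1, hc⟩ | ⟨h1, hc⟩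
      · exact Or.inl ⟨h1, fun b hb hab => hc b (hclass b hb) hab⟩
      · exact Or.inr ⟨h1, fun b hb => hc b (hclass b hb)⟩

end NCW

namespace NCW
variable {n : ℕ}

lemma reflectionLength_eq (σ : Perm (Fin n)) : reflectionLength σ = n - cN σ := by
  unfold reflectionLength
  obtain ⟨l, hl, hlen, hprod⟩ := exists_swaps σ
  have hmem : (n - cN σ) ∈ {k | ∃ l : List (Perm (Fin n)),
      (∀ τ ∈ l, τ.IsSwap) ∧ l.length = k ∧ l.prod = σ} := ⟨l, hl, hlen, hprod⟩
  apply le_antisymm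
  · exact Nat.sInf_le hmem
  · have hne : {k | ∃ l : List (Perm (Fin n)),
        (∀ τ ∈ l, τ.IsSwap) ∧ l.length = k ∧ l.prod = σ}.Nonempty := ⟨_, hmem⟩
    obtain ⟨l₀, hl₀, hlen₀, hprod₀⟩ := Nat.sInf_mem hne
    have := cN_prod_swaps l₀ hl₀
    rw [hprod₀] at this
    omega

lemma c_total (hn : 0 < n) (a b : Fin n) : (finRotate n).SameCycle a b := by
  rcases Nat.lt_or_ge n 2 with h2 | h2
  · interval_cases n
    have : a = b := Subsingleton.elim a b
    rw [this]
  · have hcyc := isCycle_finRotate_of_le h2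
    have hsupp := support_finRotate_of_le h2
    have hma : finRotate n a ≠ a := by
      have : a ∈ (finRotate n).support := hsupp ▸ mem_univ a
      exact mem_support.1 this
    have hmb : finRotate n b ≠ b := by
      have : b ∈ (finRotate n).support := hsupp ▸ mem_univ b
      exact mem_support.1 this
    exact hcyc.sameCycle hma hmb

lemma c_inc : Incr (finRotate n) := by
  intro a ha
  rcases Nat.lt_or_ge n 2 with h2 | h2
  · exfalso
    have hn : 0 < n := Fin.pos a
    interval_cases n
    exact ha (Subsingleton.elim _ _)
  · obtain ⟨m, rfl⟩ : ∃ m, n = m + 1 := ⟨n - 1, by omega⟩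
    rcases eq_or_ne a (Fin.last m) with rfl | hlast
    · right
      rw [finRotate_last]
      constructor
      · rw [Fin.lt_def, Fin.val_last]
        simp only [Fin.val_zero]
        omega
      · intro b _
        exact ⟨Fin.zero_le b, Fin.le_last b⟩
    · left
      have hval : ((finRotate (m+1) a : Fin (m+1)) : ℕ) = (a : ℕ) + 1 :=
        coe_finRotate_of_ne_last hlast
      have halt : (a : ℕ) < m := by
        have := a.isLt
        rcases Nat.lt_or_ge (a : ℕ) m with h | h
        · exact h
        · exact absurd (Fin.ext (by omega : (a:ℕ) = m)) hlast
      constructor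
      · rw [Fin.lt_def, hval]; omega
      · intro b _ hab
        rw [Fin.le_def, hval]
        rw [Fin.lt_def] at hab
        omega

lemma eq_finRotate {σ : Perm (Fin n)} (hn : 0 < n) (hinc : Incr σ)
    (htot : ∀ a b, σ.SameCycle a b) : σ = finRotate n := by
  rcases Nat.lt_or_ge n 2 with h2 | h2
  · interval_cases n
    ext a
    have : σ a = finRotate 1 a := Subsingleton.elim _ _
    rw [this]
  · have key : ∀ (τ : Perm (Fin n)), Incr τ → (∀ a b, τ.SameCycle a b) →
        ∀ a : Fin n, ((τ a : ℕ)) = if (a : ℕ) = n - 1 then 0 else (a : ℕ) + 1 := by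
      intro τ hτinc hτtot a
      have hmove : τ a ≠ a := by
        intro hfx
        have hnt : ((a:ℕ) + 1 < n) ∨ (0 < (a:ℕ)) := by
          have := a.isLt; omega
        rcases hnt with h | h
        · exact absurd (sc_fixed hfx (hτtot a ⟨(a:ℕ)+1, h⟩))
            (by intro he; have := congrArg Fin.val he; simp at this)
        · exact absurd (sc_fixed hfx (hτtot a ⟨0, by omega⟩))
            (by intro he; have := congrArg Fin.val he; simp at this; omega)
      rcases hτinc a hmove with ⟨h1, hc⟩ | ⟨h1, hc⟩
      · -- going up
        have hlt : (a : ℕ) + 1 < n := by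
          have := (τ a).isLt
          rw [Fin.lt_def] at h1
          omega
        rw [if_neg (by omega)]
        have hub := hc ⟨(a:ℕ)+1, hlt⟩ (hτtot a _) (by rw [Fin.lt_def]; simp)
        rw [Fin.le_def] at hub
        rw [Fin.lt_def] at h1
        simp at hub
        omega
      · -- a is the max
        have hmax : (a : ℕ) = n - 1 := by
          by_contra hne
          have hlt : (a : ℕ) + 1 < n := by have := a.isLt; omega
          have := (hc ⟨(a:ℕ)+1, hlt⟩ (hτtot a _)).2
          rw [Fin.le_def] at this
          simp at this
        rw [if_pos hmax]
        have := (hc ⟨0, by omega⟩ (hτtot a _)).1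
        rw [Fin.le_def] at this
        simp at this
        omega
    have h1 := key σ hinc htot
    have h2 := key (finRotate n) c_inc (c_total hn)
    ext a
    rw [h1 a, h2 a]

end NCW

namespace NCW
variable {n : ℕ}

lemma cN_eq_one_of_total {σ : Perm (Fin n)} (hn : 0 < n) (htot : ∀ a b, σ.SameCycle a b) :
    cN σ = 1 := by
  have hz : minreps σ = {mu σ ⟨0, hn⟩} := by
    ext u
    simp only [mem_singleton]
    constructor
    · intro hu
      exact minreps_unique hu (mu_mem_minreps σ ⟨0, hn⟩) (htot _ _)
    · rintro rfl
      exact mu_mem_minreps σ _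
  rw [cN, hz, card_singleton]

lemma cN_finRotate (hn : 0 < n) : cN (finRotate n) = 1 :=
  cN_eq_one_of_total hn (c_total hn)

/-- E1: noncrossing increasing permutations divide the Coxeter element -/
lemma walk_up : ∀ (k : ℕ) (σ : Perm (Fin n)), 0 < n → cN σ ≤ k → NCr σ → Incr σ →
    cN σ + cN (σ⁻¹ * finRotate n) = n + 1 := by
  intro k
  induction k with
  | zero => intro σ hn hk _ _; exact absurd (cN_pos σ hn) (by omega)
  | succ k ih =>
    intro σ hn hk hnc hinc
    by_cases htot : ∀ a b : Fin n, σ.SameCycle a b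
    · have heq : σ = finRotate n := eq_finRotate hn hinc htot
      have h1 : cN σ = 1 := cN_eq_one_of_total hn htot
      have h2 : σ⁻¹ * finRotate n = 1 := by rw [heq]; group
      rw [h1, h2, cN_one]
      omega
    · push_neg at htot
      obtain ⟨u, v, huv⟩ := htot
      -- find a class whose minimum is not 0
      have hpick : ∃ m : Fin n, m ∈ minreps σ ∧ (m : ℕ) ≠ 0 := by
        by_cases h0 : σ.SameCycle u ⟨0, hn⟩
        · refine ⟨mu σ v, mu_mem_minreps σ v, ?_⟩
          intro hm0
          have : mu σ v = ⟨0, hn⟩ := by apply Fin.ext; simp only [Fin.val_mk]; omega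
          exact huv (h0.trans ((sc_mu σ v).trans (this ▸ SameCycle.refl _ _)).symm)
        · refine ⟨mu σ u, mu_mem_minreps σ u, ?_⟩
          intro hm0
          have : mu σ u = ⟨0, hn⟩ := by apply Fin.ext; simp only [Fin.val_mk]; omega
          exact h0 (this ▸ sc_mu σ u)
      obtain ⟨m, hmmem, hm0⟩ := hpick
      set x : Fin n := ⟨(m : ℕ) - 1, by have := m.isLt; omega⟩ with hxdef
      have hx1 : (x : ℕ) + 1 = (m : ℕ) := by simp [hxdef]; omega
      have hxm : ¬ σ.SameCycle x m := by
        intro hc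
        have := mem_minreps.1 hmmem x hc.symm
        rw [Fin.le_def] at this
        simp [hxdef] at this
        omega
      set w : Fin n := σ⁻¹ m with hwdef
      have hσw : σ w = m := σ.apply_symm_apply m
      have hwm : σ.SameCycle w m := by rw [← hσw]; exact sc_step σ w
      have hxw : ¬ σ.SameCycle x w := fun h => hxm (h.trans hwm)
      have hxwne : x ≠ w := fun he => hxw (he ▸ SameCycle.refl _ _)
      obtain ⟨hncτ, hincτ⟩ := merge_preserves hnc hinc hmmem hx1 hxm
      set τ := σ * Equiv.swap x w with hτ
      have hcard : cN τ + 1 ≤ cN σ := merge_ineq hxwne hxw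
      have hih := ih τ hn (by omega) hncτ hincτ
      -- relate the complements
      have hcomp : τ⁻¹ * finRotate n = Equiv.swap x w * (σ⁻¹ * finRotate n) := by
        rw [hτ, mul_inv_rev, Equiv.swap_inv, mul_assoc]
      have hrel : cN (τ⁻¹ * finRotate n) ≤ cN (σ⁻¹ * finRotate n) + 1 := by
        have hj := join_ineq_left (τ⁻¹ * finRotate n) x w
        have : Equiv.swap x w * (τ⁻¹ * finRotate n) = σ⁻¹ * finRotate n := by
          rw [hcomp, ← mul_assoc, Equiv.swap_mul_self, one_mul]
        rw [this] at hj
        exact hj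
      have hupper : cN σ + cN (σ⁻¹ * finRotate n) ≤ n + 1 := by
        have hs := subadd σ (σ⁻¹ * finRotate n)
        have hcc : σ * (σ⁻¹ * finRotate n) = finRotate n := by group
        rw [hcc, cN_finRotate hn] at hs
        omega
      omega

end NCW

namespace NCW
variable {n : ℕ}

/-- E2: divisors of the Coxeter element are noncrossing increasing -/
lemma walk_down : ∀ (k : ℕ) (σ : Perm (Fin n)), 0 < n → cN σ ≤ k →
    cN σ + cN (σ⁻¹ * finRotate n) = n + 1 → NCr σ ∧ Incr σ := by
  intro k
  induction k with
  | zero => intro σ hn hk _; exact absurd (cN_pos σ hn) (by omega)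
  | succ k ih =>
    intro σ hn hk heq
    set ρ := σ⁻¹ * finRotate n with hρ
    by_cases hpair : ∃ x y : Fin n, ρ.SameCycle x y ∧ ¬ σ.SameCycle x y
    · obtain ⟨x, y, hρxy, hσxy⟩ := hpair
      have hxy : x ≠ y := fun he => hσxy (he ▸ SameCycle.refl _ _)
      set τ := σ * Equiv.swap x y with hτ
      have h1 : cN τ + 1 ≤ cN σ := merge_ineq hxy hσxy
      have h2 : cN σ ≤ cN τ + 1 := join_ineq σ x y
      have h3 : cN ρ + 1 ≤ cN (Equiv.swap x y * ρ) := split_ineq_left hxy hρxy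
      have hcomp : τ⁻¹ * finRotate n = Equiv.swap x y * ρ := by
        rw [hτ, mul_inv_rev, Equiv.swap_inv, mul_assoc, hρ]
      have h4 : cN τ + cN (τ⁻¹ * finRotate n) ≤ n + 1 := by
        have hs := subadd τ (τ⁻¹ * finRotate n)
        have hcc : τ * (τ⁻¹ * finRotate n) = finRotate n := by group
        rw [hcc, cN_finRotate hn] at hs
        omega
      rw [hcomp] at h4
      have heqτ : cN τ + cN (τ⁻¹ * finRotate n) = n + 1 := by
        rw [hcomp]; omega
      obtain ⟨hncτ, hincτ⟩ := ih τ hn (by omega) heqτ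
      have hmerge : τ.SameCycle x y := sc_merge hxy hσxy
      have hback : τ * Equiv.swap x y = σ := by
        rw [hτ, mul_assoc, Equiv.swap_mul_self, mul_one]
      rcases lt_or_gt_of_ne hxy with hlt | hlt
      · have := split_preserves hlt hmerge hncτ hincτ
        rwa [hback] at this
      · have hmerge' : τ.SameCycle y x := hmerge.symm
        have hτ' : τ * Equiv.swap y x = σ := by
          rw [Equiv.swap_comm]; exact hback
        have := split_preserves hlt hmerge' hncτ hincτ
        rwa [hτ'] at this
    · -- no such pair: σ is the full cycle
      push_neg at hpair
      have hsub : ∀ a b : Fin n, ρ.SameCycle a b → σ.SameCycle a b := hpair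
      have htot : ∀ a b : Fin n, σ.SameCycle a b := by
        have hc : ∀ a b : Fin n, (finRotate n).SameCycle a b → σ.SameCycle a b := by
          intro a b hab
          refine sameCycle_sub (SameCycle.equivalence σ) ?_ hab
          intro z
          have hz : (finRotate n) z = σ (ρ z) := by
            rw [hρ]
            simp [Perm.mul_apply]
          rw [hz]
          exact (hsub z (ρ z) (sc_step ρ z)).trans (sc_step σ (ρ z))
        exact fun a b => hc a b (c_total hn a b)
      have h1 : cN σ = 1 := cN_eq_one_of_total hn htot
      have h2 : cN ρ = n := by omega
      have h3 : ρ = 1 := cN_eq_n_iff.1 h2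
      have h4 : σ = finRotate n := by
        have := h3
        rw [hρ] at this
        rwa [inv_mul_eq_one] at this
      constructor
      · intro a b c d _ _ _ _ _
        exact htot a b
      · exact h4 ▸ c_inc

end NCW

theorem divides_coxeter_iff_noncrossing {n : ℕ} (σ : Equiv.Perm (Fin n)) :
    reflectionLength σ + reflectionLength (σ⁻¹ * finRotate n) = n - 1 ↔
      OrbitsNonCrossing σ ∧ CyclesIncreasing σ := by
  rcases Nat.eq_zero_or_pos n with rfl | hn
  · apply iff_of_true
    · rw [NCW.reflectionLength_eq, NCW.reflectionLength_eq]; omega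
    · constructor
      · intro a; exact a.elim0
      · intro a; exact a.elim0
  · rw [NCW.reflectionLength_eq, NCW.reflectionLength_eq]
    have hb1 := NCW.cN_pos σ hn
    have hb2 := NCW.cN_le σ
    have hb3 := NCW.cN_pos (σ⁻¹ * finRotate n) hn
    have hb4 := NCW.cN_le (σ⁻¹ * finRotate n)
    constructor
    · intro h
      have heq : NCW.cN σ + NCW.cN (σ⁻¹ * finRotate n) = n + 1 := by
        -- from subadditivity we get ≤, and h gives the rest
        have hs := NCW.subadd σ (σ⁻¹ * finRotate n)
        have hcc : σ * (σ⁻¹ * finRotate n) = finRotate n := by group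
        rw [hcc, NCW.cN_finRotate hn] at hs
        omega
      exact NCW.walk_down (NCW.cN σ) σ hn le_rfl heq
    · rintro ⟨hnc, hinc⟩
      have := NCW.walk_up (NCW.cN σ) σ hn le_rfl hnc hinc
      omega
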